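/- Strong duality for the multicomponent bathtub problem: the minimum of the primal functional equals the maximum of the dual functional, min_{s ∈ 𝒳 ∩ 𝒜} 𝓕(s) = max_{α ∈ ℝ^{N+1}} J(α), both extrema being attained. -/

import Mathlib

open MeasureTheory Finset Filter Topology

lemma finite_alloc {n : ℕ} (μc : Finset (Fin (n+1)) → ℝ) (m : Fin (n+1) → ℝ)
    (hμe : μc ∅ = 0)
    (hkey : ∀ v : Fin (n+1) → ℝ,
      ∑ i, v i * m i ≤ ∑ c, (if h : c.Nonempty then c.sup' h v else 0) * μc c) :
    ∃ p : Finset (Fin (n+1)) → Fin (n+1) → ℝ,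
      (∀ c i, 0 ≤ p c i) ∧ (∀ c, ∑ i, p c i = 1) ∧
      (∀ c, c.Nonempty → ∀ i ∉ c, p c i = 0) ∧
      (∀ i, ∑ c, μc c * p c i = m i) := by
  classical
  set P : Set (Finset (Fin (n+1)) → Fin (n+1) → ℝ) :=
    {p | ∀ c, (∀ i, 0 ≤ p c i) ∧ (∑ i, p c i = 1) ∧ (c.Nonempty → ∀ i ∉ c, p c i = 0)} with hP
  set L : (Finset (Fin (n+1)) → Fin (n+1) → ℝ) → (Fin (n+1) → ℝ) :=
    fun p i => ∑ c, μc c * p c i with hL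
  suffices hmD : m ∈ L '' P by
    obtain ⟨p, hp, hLp⟩ := hmD
    exact ⟨p, fun c => (hp c).1, fun c => (hp c).2.1, fun c hc i hi => (hp c).2.2 hc i hi,
      fun i => congrFun hLp i⟩
  by_contra hmD
  have hev : ∀ (c : Finset (Fin (n+1))) (i : Fin (n+1)),
      Continuous fun p : Finset (Fin (n+1)) → Fin (n+1) → ℝ => p c i :=
    fun c i => (continuous_apply i).comp (continuous_apply c)
  have hPclosed : IsClosed P := by
    have hrw : P = ⋂ c, ((⋂ i, {p : Finset (Fin (n+1)) → Fin (n+1) → ℝ | 0 ≤ p c i}) ∩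
        {p : Finset (Fin (n+1)) → Fin (n+1) → ℝ | ∑ i, p c i = 1} ∩
        ⋂ i, {p : Finset (Fin (n+1)) → Fin (n+1) → ℝ | c.Nonempty → i ∉ c → p c i = 0}) := by
      ext p
      simp only [hP, Set.mem_setOf_eq, Set.mem_iInter, Set.mem_inter_iff]
      constructor
      · intro h c
        exact ⟨⟨fun i => (h c).1 i, (h c).2.1⟩, fun i hc hi => (h c).2.2 hc i hi⟩
      · intro h c
        exact ⟨fun i => (h c).1.1 i, (h c).1.2, fun hc i hi => (h c).2 i hc hi⟩
    rw [hrw]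
    refine isClosed_iInter fun c => ?_
    refine ((isClosed_iInter fun i => isClosed_le continuous_const (hev c i)).inter
      (isClosed_eq (continuous_finset_sum _ fun i _ => hev c i) continuous_const)).inter
      (isClosed_iInter fun i => ?_)
    by_cases hc : c.Nonempty
    · by_cases hi : i ∈ c
      · simpa [hc, hi] using isClosed_univ
      · have : {p : Finset (Fin (n+1)) → Fin (n+1) → ℝ | c.Nonempty → i ∉ c → p c i = 0}
            = {p : Finset (Fin (n+1)) → Fin (n+1) → ℝ | p c i = 0} := by
          ext p; simp [hc, hi]
        rw [this]; exact isClosed_eq (hev c i) continuous_const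
    · simpa [hc] using isClosed_univ
  have hPsub : P ⊆ Set.Icc 0 1 := by
    intro p hp
    constructor
    · intro c; intro i; exact (hp c).1 i
    · intro c; intro i
      calc p c i ≤ ∑ j, p c j :=
            Finset.single_le_sum (f := fun j => p c j) (fun j _ => (hp c).1 j) (mem_univ i)
        _ = 1 := (hp c).2.1
  have hPcomp : IsCompact P := IsCompact.of_isClosed_subset isCompact_Icc hPclosed hPsub
  have hLcont : Continuous L :=
    continuous_pi fun i => continuous_finset_sum _ fun c _ => continuous_const.mul (hev c i)
  have hDclosed : IsClosed (L '' P) := (hPcomp.image hLcont).isClosed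
  have hDconvex : Convex ℝ (L '' P) := by
    rintro y₁ ⟨p₁, hp₁, rfl⟩ y₂ ⟨p₂, hp₂, rfl⟩ a b ha hb hab
    refine ⟨fun c i => a * p₁ c i + b * p₂ c i, ?_, ?_⟩
    · intro c
      refine ⟨fun i => add_nonneg (mul_nonneg ha ((hp₁ c).1 i)) (mul_nonneg hb ((hp₂ c).1 i)), ?_, ?_⟩
      · rw [Finset.sum_add_distrib, ← Finset.mul_sum, ← Finset.mul_sum, (hp₁ c).2.1, (hp₂ c).2.1]
        simpa using hab
      · intro hc i hi
        show a * p₁ c i + b * p₂ c i = 0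
        rw [(hp₁ c).2.2 hc i hi, (hp₂ c).2.2 hc i hi, mul_zero, mul_zero, add_zero]
    · funext i
      simp only [hL, Pi.add_apply, Pi.smul_apply, smul_eq_mul, Finset.mul_sum]
      rw [← Finset.sum_add_distrib]
      exact Finset.sum_congr rfl fun c _ => by ring
  obtain ⟨f, u, hfD, hfm⟩ := geometric_hahn_banach_closed_point hDconvex hDclosed hmD
  set v : Fin (n+1) → ℝ := fun i => f (Pi.single (M := fun _ => ℝ) i 1) with hv
  have hfv : ∀ y : Fin (n+1) → ℝ, f y = ∑ i, y i * v i := by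
    intro y
    have hy : y = ∑ i, y i • Pi.single (M := fun _ => ℝ) i 1 := by
      funext j
      simp [Pi.single_apply, Finset.sum_apply]
    conv_lhs => rw [hy]
    rw [map_sum]
    exact Finset.sum_congr rfl fun i _ => by rw [_root_.map_smul]; simp [hv, smul_eq_mul]
  set pstar : Finset (Fin (n+1)) → Fin (n+1) → ℝ := fun c =>
    if h : c.Nonempty then Pi.single (M := fun _ => ℝ) (Finset.exists_mem_eq_sup' h v).choose 1
    else Pi.single (M := fun _ => ℝ) 0 1 with hpstar
  have hsingle : ∀ j : Fin (n+1), (∀ i, 0 ≤ Pi.single (M := fun _ => ℝ) j 1 i) ∧ (∑ i, Pi.single (M := fun _ => ℝ) j 1 i = 1) := by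
    intro j
    constructor
    · intro i; rcases eq_or_ne i j with rfl | hij
      · simp
      · simp [Pi.single_eq_of_ne hij]
    · simp [Finset.sum_pi_single']
  have hpstarP : pstar ∈ P := by
    intro c
    by_cases hc : c.Nonempty
    · obtain ⟨hj, -⟩ := (Finset.exists_mem_eq_sup' hc v).choose_spec
      refine ⟨fun i => by simp only [hpstar, dif_pos hc]; exact (hsingle _).1 i,
        by simp only [hpstar, dif_pos hc]; exact (hsingle _).2, ?_⟩
      intro _ i hi
      simp only [hpstar, dif_pos hc]
      exact Pi.single_eq_of_ne (fun h => hi (by rw [h]; exact hj)) 1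
    · exact ⟨fun i => by simp only [hpstar, dif_neg hc]; exact (hsingle _).1 i,
        by simp only [hpstar, dif_neg hc]; exact (hsingle _).2, fun h => absurd h hc⟩
  have hsum : ∀ (j : Fin (n+1)), ∑ i, Pi.single (M := fun _ => ℝ) j 1 i * v i = v j := by
    intro j
    rw [Finset.sum_eq_single j]
    · simp
    · intro i _ hij; rw [Pi.single_eq_of_ne hij, zero_mul]
    · intro h; exact absurd (mem_univ j) h
  have hLpstar : f (L pstar) = ∑ c, (if h : c.Nonempty then c.sup' h v else 0) * μc c := by
    rw [hfv]
    calc ∑ i, L pstar i * v i = ∑ i, ∑ c, μc c * pstar c i * v i := by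
          refine Finset.sum_congr rfl fun i _ => ?_
          simp only [hL]
          rw [Finset.sum_mul]
      _ = ∑ c, ∑ i, μc c * pstar c i * v i := Finset.sum_comm
      _ = ∑ c, (if h : c.Nonempty then c.sup' h v else 0) * μc c := by
          refine Finset.sum_congr rfl fun c _ => ?_
          by_cases hc : c.Nonempty
          · obtain ⟨hj, hjs⟩ := (Finset.exists_mem_eq_sup' hc v).choose_spec
            rw [dif_pos hc]
            simp only [hpstar, dif_pos hc]
            rw [show (∑ i, μc c * Pi.single (M := fun _ => ℝ) (Finset.exists_mem_eq_sup' hc v).choose 1 i * v i)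
                = μc c * ∑ i, Pi.single (M := fun _ => ℝ) (Finset.exists_mem_eq_sup' hc v).choose 1 i * v i from by
              rw [Finset.mul_sum]; exact Finset.sum_congr rfl fun i _ => by ring]
            rw [hsum, mul_comm]
            congr 1
            exact hjs.symm
          · have hce : c = ∅ := Finset.not_nonempty_iff_eq_empty.mp hc
            simp [hce, hμe]
  have h1 : f m ≤ f (L pstar) := by
    rw [hfv m, hLpstar]
    calc ∑ i, m i * v i = ∑ i, v i * m i := Finset.sum_congr rfl fun i _ => mul_comm _ _
      _ ≤ _ := hkey v
  exact absurd (hfD _ ⟨pstar, hpstarP, rfl⟩) (by linarith)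


lemma bathtub_aux {X : Type*} [MeasurableSpace X] (μ : Measure X) {N : ℕ}
    (ω : X → ℝ) (hωI : Integrable ω μ) (hω0 : ∀ᵐ x ∂μ, 0 ≤ ω x)
    (m : Fin (N+1) → ℝ) (hm : ∀ i, 0 < m i) (hmass : ∑ i, m i = ∫ x, ω x ∂μ)
    (G : Fin (N+1) → X → ℝ) (hGm : ∀ i, Measurable (G i)) (C : ℝ) (hC0 : 0 ≤ C)
    (hGbdd : ∀ᵐ x ∂μ, ∀ i, |G i x| ≤ C) :
    ∃ sb : Fin (N+1) → X → ℝ, ∃ αb : Fin (N+1) → ℝ,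
      (∀ i, Integrable (sb i) μ) ∧ (∀ i, ∀ᵐ x ∂μ, 0 ≤ sb i x) ∧
      (∀ i, ∫ x, sb i x ∂μ = m i) ∧ (∀ x, ∑ i, sb i x = ω x) ∧
      (∀ s : Fin (N+1) → X → ℝ, (∀ i, Integrable (s i) μ) →
        (∀ i, ∀ᵐ x ∂μ, 0 ≤ s i x) → (∀ i, ∫ x, s i x ∂μ = m i) →
        (∀ᵐ x ∂μ, ∑ i, s i x = ω x) →
        ∑ i, ∫ x, G i x * sb i x ∂μ ≤ ∑ i, ∫ x, G i x * s i x ∂μ) ∧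
      (∀ α : Fin (N+1) → ℝ,
        (∫ x, (⨅ j, (G j x + α j)) * ω x ∂μ) - ∑ i, α i * m i ≤
        (∫ x, (⨅ j, (G j x + αb j)) * ω x ∂μ) - ∑ i, αb i * m i) ∧
      (∑ i, ∫ x, G i x * sb i x ∂μ =
        (∫ x, (⨅ j, (G j x + αb j)) * ω x ∂μ) - ∑ i, αb i * m i) := by
  classical
  set Λ : (Fin (N+1) → ℝ) → X → ℝ := fun α x => ⨅ j, (G j x + α j) with hΛdef
  -- attainment of the infimum
  have hΛatt : ∀ (α : Fin (N+1) → ℝ) x, ∃ j, Λ α x = G j x + α j ∧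
      ∀ k, G j x + α j ≤ G k x + α k := by
    intro α x
    obtain ⟨j, -, hj⟩ := Finset.exists_min_image Finset.univ (fun j => G j x + α j) ⟨0, mem_univ 0⟩
    refine ⟨j, le_antisymm (ciInf_le (Set.Finite.bddBelow (Set.finite_range _)) j)
      (le_ciInf fun k => hj k (mem_univ k)), fun k => hj k (mem_univ k)⟩
  have hΛle : ∀ (α : Fin (N+1) → ℝ) x j, Λ α x ≤ G j x + α j :=
    fun α x j => ciInf_le (Set.Finite.bddBelow (Set.finite_range _)) j
  have hΛmeas : ∀ α, Measurable (Λ α) :=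
    fun α => Measurable.iInf (fun j => (hGm j).add_const _)
  have hΛlip : ∀ (α β : Fin (N+1) → ℝ) x, |Λ α x - Λ β x| ≤ dist α β := by
    intro α β x
    have key : ∀ γ δ : Fin (N+1) → ℝ, Λ γ x - Λ δ x ≤ dist γ δ := by
      intro γ δ
      obtain ⟨j, hje, -⟩ := hΛatt δ x
      have h1 : Λ γ x ≤ G j x + γ j := hΛle γ x j
      have h2 : γ j - δ j ≤ dist γ δ := by
        have h3 := dist_le_pi_dist γ δ j
        rw [Real.dist_eq] at h3
        exact (le_abs_self _).trans h3
      linarith [hje]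
    rw [abs_sub_le_iff]
    refine ⟨key α β, ?_⟩
    have := key β α
    rwa [dist_comm] at this
  have hΛbdd : ∀ α : Fin (N+1) → ℝ, ∀ᵐ x ∂μ, |Λ α x| ≤ C + ‖α‖ := by
    intro α
    filter_upwards [hGbdd] with x hx
    obtain ⟨j, hje, -⟩ := hΛatt α x
    have h0 : Λ α x ≤ G 0 x + α 0 := hΛle α x 0
    have b1 := abs_le.mp (hx 0)
    have b2 : |α 0| ≤ ‖α‖ := by
      have := norm_le_pi_norm α 0
      rwa [Real.norm_eq_abs] at this
    have b3 := abs_le.mp (hx j)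
    have b4 : |α j| ≤ ‖α‖ := by
      have := norm_le_pi_norm α j
      rwa [Real.norm_eq_abs] at this
    rw [abs_le]
    constructor
    · rw [hje]
      have := (abs_le.mp b4).1
      have := abs_le.mp b2
      linarith [(abs_le.mp (hx j)).1, (neg_abs_le (α j)).trans (le_refl (α j))]
    · have := (abs_le.mp b2).2
      linarith [b1.2]
  have hΛωint : ∀ α : Fin (N+1) → ℝ, Integrable (fun x => Λ α x * ω x) μ := by
    intro α
    refine hωI.bdd_mul (c := C + ‖α‖) (hΛmeas α).aestronglyMeasurable ?_
    filter_upwards [hΛbdd α] with x hx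
    simpa [Real.norm_eq_abs] using hx
  set Φ : (Fin (N+1) → ℝ) → ℝ := fun α => ∫ x, Λ α x * ω x ∂μ with hΦdef
  set Jd : (Fin (N+1) → ℝ) → ℝ := fun α => Φ α - ∑ i, α i * m i with hJdef
  set W : ℝ := ∫ x, ω x ∂μ with hWdef
  have hW0 : 0 < W := by
    rw [← hmass]
    exact Finset.sum_pos (fun i _ => hm i) ⟨0, mem_univ 0⟩
  have hΛshift : ∀ (α : Fin (N+1) → ℝ) (t : ℝ) x, Λ (fun i => α i + t) x = Λ α x + t := by
    intro α t x
    obtain ⟨j, hje, hjm⟩ := hΛatt α x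
    obtain ⟨k, hke, hkm⟩ := hΛatt (fun i => α i + t) x
    apply le_antisymm
    · calc Λ (fun i => α i + t) x ≤ G j x + (α j + t) := hΛle _ x j
        _ = Λ α x + t := by rw [hje]; ring
    · have h1 : Λ α x ≤ G k x + α k := hΛle α x k
      calc Λ α x + t ≤ (G k x + α k) + t := by linarith
        _ = G k x + (α k + t) := by ring
        _ = Λ (fun i => α i + t) x := hke.symm
  have hΦshift : ∀ (α : Fin (N+1) → ℝ) (t : ℝ), Φ (fun i => α i + t) = Φ α + t * W := by
    intro α t
    simp only [hΦdef]
    have h1 : (fun x => Λ (fun i => α i + t) x * ω x) = fun x => Λ α x * ω x + t * ω x := by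
      funext x; rw [hΛshift]; ring
    rw [h1, integral_add (hΛωint α) (hωI.const_mul t), integral_const_mul, ← hWdef]
  -- dual maximizer
  have hdualmax : ∃ αb : Fin (N+1) → ℝ, ∀ α, Jd α ≤ Jd αb := by
    obtain ⟨i₀, -, hi₀⟩ := Finset.exists_min_image Finset.univ m ⟨0, mem_univ 0⟩
    set δm := m i₀ with hδmdef
    have hδm : 0 < δm := hm i₀
    have hδle : ∀ i, δm ≤ m i := fun i => hi₀ i (mem_univ i)
    set R : ℝ := 2 * C * W / δm + 1 with hRdef
    have hR0 : 0 ≤ R := by positivity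
    have hRδ : 2 * C * W < R * δm := by
      rw [hRdef, add_mul, div_mul_cancel₀ _ (ne_of_gt hδm), one_mul]
      linarith
    have hΦcont : Continuous Φ := by
      have hlip : LipschitzWith W.toNNReal Φ := by
        refine LipschitzWith.of_dist_le_mul fun α β => ?_
        rw [Real.dist_eq]
        have hsubint : Integrable (fun x => (Λ α x - Λ β x) * ω x) μ :=
          ((hΛωint α).sub (hΛωint β)).congr (Eventually.of_forall fun x => by simp only [Pi.sub_apply]; ring)
        have h1 : Φ α - Φ β = ∫ x, (Λ α x - Λ β x) * ω x ∂μ := by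
          simp only [hΦdef]
          rw [← integral_sub (hΛωint α) (hΛωint β)]
          congr 1; funext x; ring
        rw [h1]
        calc |∫ x, (Λ α x - Λ β x) * ω x ∂μ| ≤ ∫ x, |Λ α x - Λ β x| * |ω x| ∂μ := by
              have := norm_integral_le_integral_norm (μ := μ) (fun x => (Λ α x - Λ β x) * ω x)
              simpa [Real.norm_eq_abs, abs_mul] using this
          _ ≤ ∫ x, dist α β * ω x ∂μ := by
              refine integral_mono_ae
                (hsubint.abs.congr (Eventually.of_forall fun x => abs_mul _ _))
                (hωI.const_mul _) ?_
              filter_upwards [hω0] with x hx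
              rw [abs_of_nonneg hx]
              exact mul_le_mul_of_nonneg_right (hΛlip α β x) hx
          _ = dist α β * W := by rw [integral_const_mul, ← hWdef]
          _ = W.toNNReal * dist α β := by
              rw [Real.coe_toNNReal _ hW0.le]; ring
      exact hlip.continuous
    have hJcont : Continuous Jd := by
      rw [hJdef]
      exact hΦcont.sub (continuous_finset_sum _ fun i _ => (continuous_apply i).mul continuous_const)
    have h0K : (0 : Fin (N+1) → ℝ) ∈ Set.Icc (0 : Fin (N+1) → ℝ) (fun _ => R) :=
      Set.mem_Icc.mpr ⟨le_rfl, fun _ => hR0⟩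
    obtain ⟨αb, hαbK, hαbmax⟩ :=
      (isCompact_Icc (a := (0 : Fin (N+1) → ℝ)) (b := fun _ => R)).exists_isMaxOn
        ⟨0, h0K⟩ hJcont.continuousOn
    have hmaxK : ∀ γ ∈ Set.Icc (0 : Fin (N+1) → ℝ) (fun _ => R), Jd γ ≤ Jd αb :=
      fun γ hγ => hαbmax hγ
    refine ⟨αb, fun α => ?_⟩
    obtain ⟨i₁, -, hi₁⟩ := Finset.exists_min_image Finset.univ α ⟨0, mem_univ 0⟩
    have hβ0 : ∀ i, 0 ≤ α i + (- α i₁) := fun i => by linarith [hi₁ i (mem_univ i)]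
    have hJβ : Jd (fun i => α i + (- α i₁)) = Jd α := by
      simp only [hJdef]
      rw [hΦshift α (-α i₁)]
      have h2 : ∑ i, (α i + (- α i₁)) * m i = ∑ i, α i * m i + (- α i₁) * ∑ i, m i := by
        rw [Finset.mul_sum, ← Finset.sum_add_distrib]
        exact Finset.sum_congr rfl fun i _ => by ring
      rw [h2, hmass]
      ring
    rw [← hJβ]
    set β : Fin (N+1) → ℝ := fun i => α i + (- α i₁) with hβdef
    by_cases hβK : ∀ i, β i ≤ R
    · exact hmaxK β (Set.mem_Icc.mpr ⟨hβ0, hβK⟩)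
    · push_neg at hβK
      obtain ⟨i₂, hi₂⟩ := hβK
      have hub : Φ β ≤ C * W := by
        refine (integral_mono_ae (hΛωint β) (hωI.const_mul C) ?_).trans_eq
          (by rw [integral_const_mul, ← hWdef])
        filter_upwards [hGbdd, hω0] with x hx hωx
        have h1 : Λ β x ≤ G i₁ x + β i₁ := hΛle β x i₁
        have h2 : β i₁ = 0 := by simp [hβdef]
        have h3 := (abs_le.mp (hx i₁)).2
        have h4 : Λ β x ≤ C := by rw [h2] at h1; linarith
        exact mul_le_mul_of_nonneg_right h4 hωx
      have hsum : R * δm ≤ ∑ i, β i * m i := by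
        have h1 : R * δm ≤ β i₂ * m i₂ := by
          have h5 := hδle i₂
          nlinarith [hm i₂, hβ0 i₂, hi₂.le, hδm]
        exact h1.trans (Finset.single_le_sum (fun i _ => mul_nonneg (hβ0 i) (hm i).le)
          (mem_univ i₂))
      have hlb : -(C * W) ≤ Jd 0 := by
        simp only [hJdef]
        have h0 : ∑ i, (0 : Fin (N+1) → ℝ) i * m i = 0 := by simp
        have h5 : -(C * W) ≤ Φ 0 := by
          refine le_trans (le_of_eq ?_) (integral_mono_ae (hωI.const_mul (-C)) (hΛωint 0) ?_)
          · rw [integral_const_mul, ← hWdef]; ring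
          · filter_upwards [hGbdd, hω0] with x hx hωx
            obtain ⟨j, hje, -⟩ := hΛatt 0 x
            have h6 := (abs_le.mp (hx j)).1
            have h7 : -C ≤ Λ 0 x := by
              rw [hje]
              simpa using h6
            exact mul_le_mul_of_nonneg_right h7 hωx
        rw [h0]
        linarith
      have hJ0 := hmaxK 0 h0K
      have h8 : Jd β ≤ C * W - R * δm := by
        simp only [hJdef]
        linarith
      refine le_of_lt ?_
      calc Jd β ≤ C * W - R * δm := h8
        _ < -(C * W) := by linarith
        _ ≤ Jd 0 := hlb
        _ ≤ Jd αb := hJ0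
  obtain ⟨αb, hdual⟩ := hdualmax
  -- the argmin cell structure
  set τ : X → Finset (Fin (N+1)) :=
    fun x => Finset.univ.filter (fun i => G i x + αb i = Λ αb x) with hτdef
  have hτmem : ∀ x i, i ∈ τ x ↔ G i x + αb i = Λ αb x := by
    intro x i; simp [hτdef]
  have hτne : ∀ x, (τ x).Nonempty := by
    intro x
    obtain ⟨j, hje, -⟩ := hΛatt αb x
    exact ⟨j, (hτmem x j).mpr hje.symm⟩
  have hτsetmeas : ∀ c : Finset (Fin (N+1)), MeasurableSet {x | τ x = c} := by
    intro c
    have hrw : {x | τ x = c} = ⋂ i, {x | i ∈ c ↔ G i x + αb i = Λ αb x} := by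
      ext x
      simp only [Set.mem_setOf_eq, Set.mem_iInter]
      constructor
      · rintro rfl i; exact (hτmem x i).symm.symm
      · intro h
        ext i
        rw [hτmem x i, h i]
    rw [hrw]
    refine MeasurableSet.iInter fun i => ?_
    have hmeq : MeasurableSet {x | G i x + αb i = Λ αb x} :=
      measurableSet_eq_fun ((hGm i).add_const _) (hΛmeas αb)
    by_cases hic : i ∈ c
    · have hq : {x | i ∈ c ↔ G i x + αb i = Λ αb x} = {x | G i x + αb i = Λ αb x} := by
        ext x; simp [hic]
      rw [hq]; exact hmeq
    · have hq : {x | i ∈ c ↔ G i x + αb i = Λ αb x} = {x | G i x + αb i = Λ αb x}ᶜ := by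
        ext x; simp [hic]
      rw [hq]; exact hmeq.compl
  set μcell : Finset (Fin (N+1)) → ℝ :=
    fun c => ∫ x, Set.indicator {y | τ y = c} ω x ∂μ with hμcdef
  have hdecomp : ∀ (w : Finset (Fin (N+1)) → ℝ),
      (fun x => w (τ x) * ω x)
        = fun x => ∑ c, Set.indicator {y | τ y = c} (fun y => w c * ω y) x := by
    intro w; funext x
    rw [Finset.sum_eq_single (τ x)]
    · rw [Set.indicator_of_mem (show x ∈ {y | τ y = τ x} from rfl)]
    · intro c _ hc
      refine (Set.indicator_of_notMem ?_ _)
      intro hmem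
      simp only [Set.mem_setOf_eq] at hmem
      exact hc hmem.symm
    · intro h; exact absurd (mem_univ _) h
  have hindint : ∀ (c : Finset (Fin (N+1))) (r : ℝ),
      Integrable (Set.indicator {y | τ y = c} (fun y => r * ω y)) μ :=
    fun c r => (hωI.const_mul r).indicator (hτsetmeas c)
  have hwint : ∀ w : Finset (Fin (N+1)) → ℝ, Integrable (fun x => w (τ x) * ω x) μ := by
    intro w; rw [hdecomp w]
    exact integrable_finset_sum _ fun c _ => hindint c (w c)
  have hsplit : ∀ w : Finset (Fin (N+1)) → ℝ,
      ∫ x, w (τ x) * ω x ∂μ = ∑ c, w c * μcell c := by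
    intro w
    rw [hdecomp w, integral_finset_sum _ fun c _ => hindint c (w c)]
    refine Finset.sum_congr rfl fun c _ => ?_
    simp only [hμcdef]
    rw [← integral_const_mul]
    congr 1
    funext x
    by_cases hx : x ∈ {y | τ y = c}
    · rw [Set.indicator_of_mem hx, Set.indicator_of_mem hx]
    · rw [Set.indicator_of_notMem hx, Set.indicator_of_notMem hx, mul_zero]
  have hμcempty : μcell ∅ = 0 := by
    have h1 : {y | τ y = (∅ : Finset (Fin (N+1)))} = (∅ : Set X) := by
      ext x
      simp only [Set.mem_setOf_eq, Set.mem_empty_iff_false, iff_false]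
      exact fun h => (Finset.nonempty_iff_ne_empty.mp (hτne x)) h
    simp only [hμcdef, h1, Set.indicator_empty, Pi.zero_apply, integral_zero]
  -- the key inequality, by differentiating the dual at its maximum
  have hkey : ∀ v : Fin (N+1) → ℝ,
      ∑ i, v i * m i ≤ ∑ c, (if h : c.Nonempty then c.sup' h v else 0) * μcell c := by
    intro v
    set w : Finset (Fin (N+1)) → ℝ :=
      fun c => if h : c.Nonempty then c.sup' h v else 0 with hwdef
    rw [← hsplit w]
    have ht0 : ∀ n : ℕ, (0:ℝ) < 1 / (n+1) := fun n => by positivity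
    set Fn : ℕ → X → ℝ := fun n x =>
      ((n:ℝ)+1) * (Λ αb x - Λ (fun i => αb i - (1/((n:ℝ)+1)) * v i) x) * ω x with hFndef
    have hμFn : ∀ n, AEStronglyMeasurable (Fn n) μ := by
      intro n
      exact ((((hΛmeas αb).sub (hΛmeas _)).const_mul _).aestronglyMeasurable).mul
        hωI.aestronglyMeasurable
    have hdistn : ∀ (n : ℕ) x,
        |Λ αb x - Λ (fun i => αb i - (1/((n:ℝ)+1)) * v i) x| ≤ (1/((n:ℝ)+1)) * ‖v‖ := by
      intro n x
      refine (hΛlip αb _ x).trans ?_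
      have he : αb - (fun i => αb i - (1/((n:ℝ)+1)) * v i) = (1/((n:ℝ)+1)) • v := by
        funext i; simp only [Pi.sub_apply, Pi.smul_apply, smul_eq_mul]; ring
      rw [dist_eq_norm, he, norm_smul, Real.norm_eq_abs, abs_of_pos (ht0 n)]
    have hbound : ∀ n, ∀ᵐ x ∂μ, ‖Fn n x‖ ≤ ‖v‖ * ω x := by
      intro n
      filter_upwards [hω0] with x hx
      simp only [hFndef, Real.norm_eq_abs, abs_mul, abs_of_nonneg hx]
      refine mul_le_mul_of_nonneg_right ?_ hx
      have h1 : |((n:ℝ)+1)| = (n:ℝ)+1 := abs_of_pos (by positivity)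
      rw [h1]
      calc ((n:ℝ)+1) * |Λ αb x - Λ (fun i => αb i - (1/((n:ℝ)+1)) * v i) x|
          ≤ ((n:ℝ)+1) * ((1/((n:ℝ)+1)) * ‖v‖) :=
            mul_le_mul_of_nonneg_left (hdistn n x) (by positivity)
        _ = ‖v‖ := by field_simp
    have hptlim : ∀ x (t : ℝ), 0 < t → (∀ j, j ∉ τ x → w (τ x) < v j →
        t * (v j - w (τ x)) ≤ (G j x + αb j) - Λ αb x) →
        Λ (fun i => αb i - t * v i) x = Λ αb x - t * w (τ x) := by
      intro x t ht hsmall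
      obtain ⟨j₀, hj₀c, hj₀s⟩ := Finset.exists_mem_eq_sup' (hτne x) v
      have hwτ : w (τ x) = (τ x).sup' (hτne x) v := by simp only [hwdef, dif_pos (hτne x)]
      apply le_antisymm
      · calc Λ (fun i => αb i - t * v i) x ≤ G j₀ x + (αb j₀ - t * v j₀) := hΛle _ x j₀
          _ = Λ αb x - t * w (τ x) := by
              have h6 := (hτmem x j₀).mp hj₀c
              rw [hwτ, hj₀s, ← h6]; ring
      · refine le_ciInf fun k => ?_
        show Λ αb x - t * w (τ x) ≤ G k x + (αb k - t * v k)
        by_cases hk : k ∈ τ x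
        · have he := (hτmem x k).mp hk
          have hvk : v k ≤ w (τ x) := by rw [hwτ]; exact Finset.le_sup' v hk
          have h7 : t * v k ≤ t * w (τ x) := mul_le_mul_of_nonneg_left hvk ht.le
          linarith [he, h7]
        · have hge : Λ αb x ≤ G k x + αb k := hΛle αb x k
          have hne : Λ αb x ≠ G k x + αb k := fun h => hk ((hτmem x k).mpr h.symm)
          have hlt : Λ αb x < G k x + αb k := lt_of_le_of_ne hge hne
          by_cases hvk : v k ≤ w (τ x)
          · have h7 : t * v k ≤ t * w (τ x) := mul_le_mul_of_nonneg_left hvk ht.le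
            linarith
          · push_neg at hvk
            have h8 := hsmall k hk hvk
            linarith
    have hlim : ∀ᵐ x ∂μ, Tendsto (fun n => Fn n x) atTop (𝓝 (w (τ x) * ω x)) := by
      refine Eventually.of_forall fun x => ?_
      set B : Finset (Fin (N+1)) :=
        Finset.univ.filter (fun j => j ∉ τ x ∧ w (τ x) < v j) with hBdef
      set t₀ : ℝ := if hB : B.Nonempty
        then B.inf' hB (fun j => ((G j x + αb j) - Λ αb x) / (v j - w (τ x))) else 1 with ht₀def
      have ht₀pos : 0 < t₀ := by
        rw [ht₀def]
        split_ifs with hB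
        · rw [Finset.lt_inf'_iff]
          intro j hj
          simp only [hBdef, Finset.mem_filter] at hj
          obtain ⟨-, hjτ, hjv⟩ := hj
          have hge : Λ αb x ≤ G j x + αb j := hΛle αb x j
          have hne : Λ αb x ≠ G j x + αb j := fun h => hjτ ((hτmem x j).mpr h.symm)
          exact div_pos (sub_pos.mpr (lt_of_le_of_ne hge hne)) (sub_pos.mpr hjv)
        · exact one_pos
      have hev : ∀ᶠ n in atTop, w (τ x) * ω x = Fn n x := by
        obtain ⟨M, hM⟩ := exists_nat_ge (1 / t₀)
        refine eventually_atTop.mpr ⟨M, fun n hn => ?_⟩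
        have htn : (1:ℝ)/((n:ℝ)+1) ≤ t₀ := by
          rw [div_le_iff₀ (by positivity)]
          have h1 : (1:ℝ)/t₀ ≤ (n:ℝ) + 1 := by
            calc (1:ℝ)/t₀ ≤ M := hM
              _ ≤ n := by exact_mod_cast hn
              _ ≤ (n:ℝ) + 1 := by linarith
          calc (1:ℝ) = t₀ * (1/t₀) := by field_simp
            _ ≤ t₀ * ((n:ℝ)+1) := mul_le_mul_of_nonneg_left h1 ht₀pos.le
        have hsm : ∀ j, j ∉ τ x → w (τ x) < v j →
            (1/((n:ℝ)+1)) * (v j - w (τ x)) ≤ (G j x + αb j) - Λ αb x := by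
          intro j hjτ hjv
          have hjB : j ∈ B := by simp [hBdef, hjτ, hjv]
          have h2 : t₀ ≤ ((G j x + αb j) - Λ αb x) / (v j - w (τ x)) := by
            rw [ht₀def, dif_pos ⟨j, hjB⟩]
            exact Finset.inf'_le _ hjB
          have h3 := htn.trans h2
          rw [le_div_iff₀ (sub_pos.mpr hjv)] at h3
          linarith
        have heq := hptlim x (1/((n:ℝ)+1)) (ht0 n) hsm
        simp only [hFndef]
        rw [heq, sub_sub_cancel]
        field_simp
      exact Tendsto.congr' hev tendsto_const_nhds
    have hTend := tendsto_integral_of_dominated_convergence (μ := μ)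
      (fun x => ‖v‖ * ω x) hμFn (hωI.const_mul _) hbound hlim
    refine ge_of_tendsto hTend (Eventually.of_forall fun n => ?_)
    have hint : ∫ x, Fn n x ∂μ
        = ((n:ℝ)+1) * (Φ αb - Φ (fun i => αb i - (1/((n:ℝ)+1)) * v i)) := by
      have h1 : (fun x => Fn n x) = fun x =>
          ((n:ℝ)+1) * (Λ αb x * ω x - Λ (fun i => αb i - (1/((n:ℝ)+1)) * v i) x * ω x) := by
        funext x; simp only [hFndef]; ring
      rw [h1, integral_const_mul, integral_sub (hΛωint _) (hΛωint _)]
    rw [hint]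
    have hJle := hdual (fun i => αb i - (1/((n:ℝ)+1)) * v i)
    simp only [hJdef] at hJle
    have h4 : ∑ i, (αb i - (1/((n:ℝ)+1)) * v i) * m i
        = ∑ i, αb i * m i - (1/((n:ℝ)+1)) * ∑ i, v i * m i := by
      rw [Finset.mul_sum, ← Finset.sum_sub_distrib]
      exact Finset.sum_congr rfl fun i _ => by ring
    rw [h4] at hJle
    have h5 : (1/((n:ℝ)+1)) * ∑ i, v i * m i
        ≤ Φ αb - Φ (fun i => αb i - (1/((n:ℝ)+1)) * v i) := by linarith
    have h6 := mul_le_mul_of_nonneg_left h5 (show (0:ℝ) ≤ (n:ℝ)+1 by positivity)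
    calc ∑ i, v i * m i = ((n:ℝ)+1) * ((1/((n:ℝ)+1)) * ∑ i, v i * m i) := by
          field_simp
      _ ≤ ((n:ℝ)+1) * (Φ αb - Φ (fun i => αb i - (1/((n:ℝ)+1)) * v i)) := h6
  -- apply the finite allocation lemma
  obtain ⟨p, hp0, hp1, hpsupp, hpm⟩ := finite_alloc μcell m hμcempty hkey
  have hGsbint : ∀ i, Integrable (fun x => G i x * (p (τ x) i * ω x)) μ := by
    intro i
    refine (hwint (fun c => p c i)).bdd_mul (c := C) (hGm i).aestronglyMeasurable ?_
    filter_upwards [hGbdd] with x hx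
    simpa [Real.norm_eq_abs] using hx i
  have hpt : ∀ x, ∑ i, (G i x + αb i) * p (τ x) i = Λ αb x := by
    intro x
    have h1 : ∀ i, (G i x + αb i) * p (τ x) i = Λ αb x * p (τ x) i := by
      intro i
      by_cases hi : i ∈ τ x
      · rw [(hτmem x i).mp hi]
      · rw [hpsupp (τ x) (hτne x) i hi, mul_zero, mul_zero]
    rw [Finset.sum_congr rfl fun i _ => h1 i, ← Finset.mul_sum, hp1, mul_one]
  have hpe : ∑ i, ∫ x, G i x * (p (τ x) i * ω x) ∂μ = Jd αb := by
    rw [← integral_finset_sum _ fun i _ => hGsbint i]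
    have hfe : (fun x => ∑ i, G i x * (p (τ x) i * ω x))
        = fun x => Λ αb x * ω x - (∑ i, αb i * p (τ x) i) * ω x := by
      funext x
      have h2 : ∑ i, G i x * (p (τ x) i * ω x)
          = (∑ i, (G i x + αb i) * p (τ x) i) * ω x - (∑ i, αb i * p (τ x) i) * ω x := by
        rw [Finset.sum_mul, Finset.sum_mul, ← Finset.sum_sub_distrib]
        exact Finset.sum_congr rfl fun i _ => by ring
      rw [h2, hpt x]
    rw [hfe, integral_sub (hΛωint αb) (hwint (fun c => ∑ i, αb i * p c i)),
      hsplit (fun c => ∑ i, αb i * p c i)]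
    have h3 : ∑ c, (∑ i, αb i * p c i) * μcell c = ∑ i, αb i * m i := by
      have h4 : ∀ c : Finset (Fin (N+1)), (∑ i, αb i * p c i) * μcell c
          = ∑ i, αb i * (μcell c * p c i) := by
        intro c; rw [Finset.sum_mul]; exact Finset.sum_congr rfl fun i _ => by ring
      rw [Finset.sum_congr rfl fun c _ => h4 c, Finset.sum_comm]
      refine Finset.sum_congr rfl fun i _ => ?_
      rw [← Finset.mul_sum, hpm i]
    rw [h3]
  -- weak duality
  have hws : ∀ s : Fin (N+1) → X → ℝ, (∀ i, Integrable (s i) μ) →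
      (∀ i, ∀ᵐ x ∂μ, 0 ≤ s i x) → (∀ i, ∫ x, s i x ∂μ = m i) →
      (∀ᵐ x ∂μ, ∑ i, s i x = ω x) → Jd αb ≤ ∑ i, ∫ x, G i x * s i x ∂μ := by
    intro s hsint hs0 hsm hssum
    have hLsi : ∀ i, Integrable (fun x => Λ αb x * s i x) μ := by
      intro i
      refine (hsint i).bdd_mul (c := C + ‖αb‖) (hΛmeas αb).aestronglyMeasurable ?_
      filter_upwards [hΛbdd αb] with x hx
      simpa [Real.norm_eq_abs] using hx
    have hstep : ∀ i, (∫ x, Λ αb x * s i x ∂μ) - αb i * m i ≤ ∫ x, G i x * s i x ∂μ := by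
      intro i
      have hsub : Integrable (fun x => Λ αb x * s i x - αb i * s i x) μ :=
        ((hLsi i).sub ((hsint i).const_mul (αb i))).congr
          (Eventually.of_forall fun x => by simp only [Pi.sub_apply])
      have h1 : ∫ x, (Λ αb x * s i x - αb i * s i x) ∂μ ≤ ∫ x, G i x * s i x ∂μ := by
        refine integral_mono_ae hsub ?_ ?_
        · refine (hsint i).bdd_mul (c := C) (hGm i).aestronglyMeasurable ?_
          filter_upwards [hGbdd] with x hx
          simpa [Real.norm_eq_abs] using hx i
        · filter_upwards [hs0 i] with x hx
          have h2 : Λ αb x ≤ G i x + αb i := hΛle αb x i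
          nlinarith
      rw [integral_sub (hLsi i) ((hsint i).const_mul (αb i)), integral_const_mul, hsm i] at h1
      exact h1
    have hfirst : (∫ x, Λ αb x * ω x ∂μ) = ∑ i, ∫ x, Λ αb x * s i x ∂μ := by
      rw [← integral_finset_sum _ fun i _ => hLsi i]
      refine integral_congr_ae ?_
      filter_upwards [hssum] with x hx
      rw [← Finset.mul_sum, hx]
    have h5 : ∑ i, ((∫ x, Λ αb x * s i x ∂μ) - αb i * m i) ≤ ∑ i, ∫ x, G i x * s i x ∂μ :=
      Finset.sum_le_sum fun i _ => hstep i
    rw [Finset.sum_sub_distrib] at h5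
    calc Jd αb = (∫ x, Λ αb x * ω x ∂μ) - ∑ i, αb i * m i := rfl
      _ = (∑ i, ∫ x, Λ αb x * s i x ∂μ) - ∑ i, αb i * m i := by rw [hfirst]
      _ ≤ ∑ i, ∫ x, G i x * s i x ∂μ := h5
  refine ⟨fun i x => p (τ x) i * ω x, αb, fun i => hwint (fun c => p c i), ?_, ?_, ?_, ?_, ?_, ?_⟩
  · intro i
    filter_upwards [hω0] with x hx
    exact mul_nonneg (hp0 _ i) hx
  · intro i
    rw [hsplit (fun c => p c i), ← hpm i]
    exact Finset.sum_congr rfl fun c _ => mul_comm _ _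
  · intro x
    rw [← Finset.sum_mul, hp1, one_mul]
  · intro s h1 h2 h3 h4
    exact le_of_le_of_eq (le_of_eq hpe) rfl |>.trans (hws s h1 h2 h3 h4)
  · intro α
    exact hdual α
  · exact hpe



open MeasureTheory
open scoped ENNReal

/-- The feasible set `𝒳 ∩ 𝒜` of the multicomponent bathtub problem: vectors of
nonnegative integrable phase contents with prescribed masses `m i` whose sum
saturates the constraint `ω` almost everywhere on `Ω`. -/
def feasible {d N : ℕ} (Ω : Set (Fin d → ℝ)) (ω : (Fin d → ℝ) → ℝ)
    (m : Fin (N + 1) → ℝ) (s : Fin (N + 1) → (Fin d → ℝ) → ℝ) : Prop :=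
  (∀ i, IntegrableOn (s i) Ω) ∧
  (∀ i, ∀ᵐ x ∂(volume.restrict Ω), 0 ≤ s i x) ∧
  (∀ i, ∫ x in Ω, s i x = m i) ∧
  (∀ᵐ x ∂(volume.restrict Ω), ∑ i, s i x = ω x)

/-- The primal linear functional `𝓕(s) = Σ_i ∫_Ω F_i s_i dx`. -/
noncomputable def primalF {d N : ℕ} (Ω : Set (Fin d → ℝ))
    (F : Fin (N + 1) → (Fin d → ℝ) → ℝ)
    (s : Fin (N + 1) → (Fin d → ℝ) → ℝ) : ℝ :=
  ∑ i, ∫ x in Ω, F i x * s i x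

/-- The dual functional `J(α) = ∫_Ω (min_j (F_j + α_j)) ω dx − Σ_i α_i m_i`. -/
noncomputable def dualJ {d N : ℕ} (Ω : Set (Fin d → ℝ)) (ω : (Fin d → ℝ) → ℝ)
    (F : Fin (N + 1) → (Fin d → ℝ) → ℝ) (m : Fin (N + 1) → ℝ)
    (α : Fin (N + 1) → ℝ) : ℝ :=
  (∫ x in Ω, (⨅ j, (F j x + α j)) * ω x) - ∑ i, α i * m i

/-- Strong duality for the multicomponent bathtub problem: both the primal
minimum and the dual maximum are attained and they coincide. -/
theorem stmt_14 {d N : ℕ}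
    (Ω : Set (Fin d → ℝ)) (hΩ : MeasurableSet Ω)
    (ω : (Fin d → ℝ) → ℝ) (hωint : IntegrableOn ω Ω)
    (hω0 : ∀ᵐ x ∂(volume.restrict Ω), 0 ≤ ω x)
    (m : Fin (N + 1) → ℝ) (hm : ∀ i, 0 < m i)
    (hmass : ∑ i, m i = ∫ x in Ω, ω x)
    (F : Fin (N + 1) → (Fin d → ℝ) → ℝ)
    (hFmeas : ∀ i, AEStronglyMeasurable (F i) (volume.restrict Ω))
    (hFbdd : ∃ C : ℝ, ∀ i, ∀ᵐ x ∂(volume.restrict Ω), |F i x| ≤ C) :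
    ∃ sb : Fin (N + 1) → (Fin d → ℝ) → ℝ, ∃ αb : Fin (N + 1) → ℝ,
      feasible Ω ω m sb ∧
      (∀ s, feasible Ω ω m s → primalF Ω F sb ≤ primalF Ω F s) ∧
      (∀ α, dualJ Ω ω F m α ≤ dualJ Ω ω F m αb) ∧
      primalF Ω F sb = dualJ Ω ω F m αb := by
  classical
  obtain ⟨C₀, hC₀⟩ := hFbdd
  set G : Fin (N+1) → (Fin d → ℝ) → ℝ := fun i => (hFmeas i).mk (F i) with hGdef
  have hGm : ∀ i, Measurable (G i) := fun i => (hFmeas i).stronglyMeasurable_mk.measurable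
  have hFG : ∀ i, F i =ᵐ[volume.restrict Ω] G i := fun i => (hFmeas i).ae_eq_mk
  have hGbdd : ∀ᵐ x ∂(volume.restrict Ω), ∀ i, |G i x| ≤ max C₀ 0 := by
    rw [ae_all_iff]
    intro i
    filter_upwards [hC₀ i, hFG i] with x h1 h2
    rw [← h2]
    exact h1.trans (le_max_left _ _)
  obtain ⟨sb, αb, h1, h2, h3, h4, h5, h6, h7⟩ :=
    bathtub_aux (volume.restrict Ω) ω hωint hω0 m hm hmass G hGm (max C₀ 0)
      (le_max_right _ _) hGbdd
  have hFGint : ∀ (u : (Fin d → ℝ) → ℝ) i,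
      ∫ x in Ω, F i x * u x = ∫ x in Ω, G i x * u x := by
    intro u i
    refine integral_congr_ae ?_
    filter_upwards [hFG i] with x hx
    rw [hx]
  have hprim : ∀ s : Fin (N+1) → (Fin d → ℝ) → ℝ,
      primalF Ω F s = ∑ i, ∫ x in Ω, G i x * s i x := by
    intro s
    exact Finset.sum_congr rfl fun i _ => hFGint (s i) i
  have hdualeq : ∀ α : Fin (N+1) → ℝ,
      dualJ Ω ω F m α = (∫ x in Ω, (⨅ j, (G j x + α j)) * ω x) - ∑ i, α i * m i := by
    intro α
    have he : ∫ x in Ω, (⨅ j, (F j x + α j)) * ω x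
        = ∫ x in Ω, (⨅ j, (G j x + α j)) * ω x := by
      refine integral_congr_ae ?_
      filter_upwards [ae_all_iff.2 hFG] with x hx
      have : (⨅ j, (F j x + α j)) = ⨅ j, (G j x + α j) := iInf_congr fun j => by rw [hx j]
      rw [this]
    rw [dualJ, he]
  refine ⟨sb, αb, ⟨h1, h2, h3, Filter.Eventually.of_forall h4⟩, ?_, ?_, ?_⟩
  · intro s hs
    obtain ⟨hs1, hs2, hs3, hs4⟩ := hs
    rw [hprim sb, hprim s]
    exact h5 s hs1 hs2 hs3 hs4
  · intro α
    rw [hdualeq α, hdualeq αb]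
    exact h6 α
  · rw [hprim sb, hdualeq αb]
    exact h7
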